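/- Let I, J ⊂ S be monomial ideals and e ≥ deg(I), f ≥ deg(J) integers such that I_{≥ e} and J_{≥ f} are stable. Then (I · J)_{≥ e+f} is stable. -/

import Mathlib

/-! Monomials in `S = K[x_1,…,x_n]` are identified with their exponent vectors in
`Fin n →₀ ℕ` (0-indexed: the variable `x_j` of the paper is index `j-1`).
A monomial ideal is identified with its set `M` of exponent vectors of monomials. -/

/-- `M` is the set of exponent vectors of the monomials of a monomial ideal:
it is closed under multiplication by arbitrary monomials. -/
def MonIdeal {n : ℕ} (M : Set (Fin n →₀ ℕ)) : Prop :=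
  ∀ u ∈ M, ∀ v : Fin n →₀ ℕ, u + v ∈ M

/-- The Borel type condition: for every monomial `u ∈ I` and `j < i` with `x_i ∣ u`
there is `t > 0` with `x_j^t · u / x_i^{ν_i(u)} ∈ I`. -/
def BorelProp {n : ℕ} (M : Set (Fin n →₀ ℕ)) : Prop :=
  ∀ u ∈ M, ∀ i j : Fin n, j < i → u i ≠ 0 →
    ∃ t : ℕ, 0 < t ∧ Finsupp.single j t + Finsupp.update u i 0 ∈ M

/-- `i = m(u)`, the largest index of a variable dividing the monomial `u`. -/
def IsMaxVar {n : ℕ} (u : Fin n →₀ ℕ) (i : Fin n) : Prop :=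
  u i ≠ 0 ∧ ∀ k : Fin n, i < k → u k = 0

/-- `M` is stable: for every monomial `u ∈ M` and `j < m(u)`, `x_j · u / x_{m(u)} ∈ M`. -/
def StableProp {n : ℕ} (M : Set (Fin n →₀ ℕ)) : Prop :=
  ∀ u ∈ M, ∀ i : Fin n, IsMaxVar u i → ∀ j : Fin n, j < i →
    Finsupp.single j 1 + Finsupp.update u i (u i - 1) ∈ M

/-- degree of a monomial. -/
def mdeg {n : ℕ} (u : Fin n →₀ ℕ) : ℕ := ∑ k : Fin n, u k

/-- `u` is a minimal monomial generator of `M` (divisibility of monomials is `≤`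
of exponent vectors). -/
def MinGen {n : ℕ} (M : Set (Fin n →₀ ℕ)) (u : Fin n →₀ ℕ) : Prop :=
  u ∈ M ∧ ∀ v ∈ M, v ≤ u → v = u

/-- `deg(I)`: the maximal degree of a minimal monomial generator. -/
noncomputable def idealDeg {n : ℕ} (M : Set (Fin n →₀ ℕ)) : ℕ :=
  sSup {d | ∃ u, MinGen M u ∧ mdeg u = d}

/-- `I_{≥ e}`: the ideal generated by all monomials of `I` of degree `≥ e`. -/
def geSet {n : ℕ} (M : Set (Fin n →₀ ℕ)) (e : ℕ) : Set (Fin n →₀ ℕ) :=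
  {w | ∃ u ∈ M, e ≤ mdeg u ∧ u ≤ w}

/-- the product of two monomial ideals (on the level of monomials). -/
def prodSet {n : ℕ} (M N : Set (Fin n →₀ ℕ)) : Set (Fin n →₀ ℕ) :=
  {w | ∃ u ∈ M, ∃ v ∈ N, w = u + v}

/-- The Castelnuovo–Mumford regularity of a monomial ideal of Borel type: by
[Cimpoeas, Cor. 8] / Theorem 1.5, `reg(I) = min { e ≥ deg I : I_{≥e} is stable }`. -/
noncomputable def regSet {n : ℕ} (M : Set (Fin n →₀ ℕ)) : ℕ :=
  sInf {e | idealDeg M ≤ e ∧ StableProp (geSet M e)}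

/-- `q` (0-indexed) is the largest index with `x_q ∈ √I`. -/
def IsQ {n : ℕ} (M : Set (Fin n →₀ ℕ)) (q : Fin n) : Prop :=
  (∃ k : ℕ, 0 < k ∧ Finsupp.single q k ∈ M) ∧
    ∀ j : Fin n, (∃ k : ℕ, 0 < k ∧ Finsupp.single j k ∈ M) → j ≤ q

section Aux
variable {n : ℕ}

lemma mdeg_add (a b : Fin n →₀ ℕ) : mdeg (a + b) = mdeg a + mdeg b := by
  simp [mdeg, Finset.sum_add_distrib]

lemma mdeg_mono {a b : Fin n →₀ ℕ} (h : a ≤ b) : mdeg a ≤ mdeg b :=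
  Finset.sum_le_sum fun k _ => h k

lemma mdeg_single (i : Fin n) (t : ℕ) : mdeg (Finsupp.single i t) = t := by
  simp [mdeg, Finsupp.single_apply]

lemma eq_of_le_of_mdeg_le {a b : Fin n →₀ ℕ} (h : a ≤ b) (h2 : mdeg b ≤ mdeg a) : a = b := by
  have h3 : mdeg a = mdeg b := le_antisymm (mdeg_mono h) h2
  ext k
  exact (Finset.sum_eq_sum_iff_of_le (fun i _ => h i)).1 h3 k (Finset.mem_univ k)

lemma mem_of_le_mem {M : Set (Fin n →₀ ℕ)} (hM : MonIdeal M) {u w : Fin n →₀ ℕ}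
    (hu : u ∈ M) (h : u ≤ w) : w ∈ M := by
  have := hM u hu (w - u)
  rwa [add_tsub_cancel_of_le h] at this

lemma mem_geSet_iff {M : Set (Fin n →₀ ℕ)} (hM : MonIdeal M) {e : ℕ} {w : Fin n →₀ ℕ} :
    w ∈ geSet M e ↔ w ∈ M ∧ e ≤ mdeg w := by
  constructor
  · rintro ⟨u, hu, hd, hle⟩
    exact ⟨mem_of_le_mem hM hu hle, hd.trans (mdeg_mono hle)⟩
  · rintro ⟨h1, h2⟩
    exact ⟨w, h1, h2, le_rfl⟩

lemma exists_minGen_le {M : Set (Fin n →₀ ℕ)} :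
    ∀ u ∈ M, ∃ g, MinGen M g ∧ g ≤ u := by
  suffices H : ∀ d : ℕ, ∀ u ∈ M, mdeg u ≤ d → ∃ g, MinGen M g ∧ g ≤ u by
    intro u hu; exact H (mdeg u) u hu le_rfl
  intro d
  induction d with
  | zero =>
    intro u hu hd
    refine ⟨u, ⟨hu, fun v hv hle => ?_⟩, le_rfl⟩
    exact eq_of_le_of_mdeg_le hle (by omega)
  | succ d ih =>
    intro u hu hd
    by_cases hmin : ∀ v ∈ M, v ≤ u → v = u
    · exact ⟨u, ⟨hu, hmin⟩, le_rfl⟩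
    · push_neg at hmin
      obtain ⟨v, hv, hle, hne⟩ := hmin
      have hlt : mdeg v < mdeg u := by
        rcases lt_or_ge (mdeg v) (mdeg u) with h | h
        · exact h
        · exact absurd (eq_of_le_of_mdeg_le hle h) hne
      obtain ⟨g, hg, hgv⟩ := ih v hv (by omega)
      exact ⟨g, hg, hgv.trans hle⟩

lemma minGen_finite (M : Set (Fin n →₀ ℕ)) : {g | MinGen M g}.Finite := by
  refine IsAntichain.finite_of_partiallyWellOrderedOn (r := (· ≤ ·))
    (fun a ha b hb hne hle => hne (hb.2 a ha.1 hle)) (Set.isPWO_of_wellQuasiOrderedLE _)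

lemma mdeg_minGen_le {M : Set (Fin n →₀ ℕ)} {g : Fin n →₀ ℕ} (hg : MinGen M g) :
    mdeg g ≤ idealDeg M := by
  refine le_csSup ?_ ⟨g, hg, rfl⟩
  have : {d | ∃ u, MinGen M u ∧ mdeg u = d} = mdeg '' {g | MinGen M g} := by
    ext d; simp [Set.mem_image, Set.mem_setOf_eq, and_comm, eq_comm]
  rw [this]
  exact ((minGen_finite M).image mdeg).bddAbove

lemma interp : ∀ (k : ℕ) (a b : Fin n →₀ ℕ), a ≤ b → mdeg a + k ≤ mdeg b →
    ∃ c, a ≤ c ∧ c ≤ b ∧ mdeg c = mdeg a + k := by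
  intro k
  induction k with
  | zero => intro a b h _; exact ⟨a, le_rfl, h, by simp⟩
  | succ k ih =>
    intro a b hab hd
    have hab' : ∀ i, a i ≤ b i := fun i => hab i
    have hne : ∃ i, a i < b i := by
      by_contra hc; push_neg at hc
      have : a = b := le_antisymm hab fun i => hc i
      subst this; omega
    obtain ⟨i, hi⟩ := hne
    have h1 : a + Finsupp.single i 1 ≤ b := by
      intro k'
      rcases eq_or_ne k' i with rfl | hk
      · simpa [Finsupp.single_apply] using hi
      · simpa [Finsupp.single_apply, Ne.symm hk] using hab' k'
    have h2 : mdeg (a + Finsupp.single i 1) = mdeg a + 1 := by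
      rw [mdeg_add, mdeg_single]
    obtain ⟨c, hc1, hc2, hc3⟩ := ih (a + Finsupp.single i 1) b h1 (by omega)
    exact ⟨c, le_trans (self_le_add_right a _) hc1, hc2, by omega⟩

lemma mdeg_tsub {a b : Fin n →₀ ℕ} (h : b ≤ a) : mdeg (a - b) = mdeg a - mdeg b := by
  have h1 : b + (a - b) = a := add_tsub_cancel_of_le h
  have h2 : mdeg b + mdeg (a - b) = mdeg a := by rw [← mdeg_add, h1]
  omega

lemma exists_mem_mdeg_eq {M : Set (Fin n →₀ ℕ)} (hM : MonIdeal M) {e : ℕ}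
    (he : idealDeg M ≤ e) {u w : Fin n →₀ ℕ} (hu : u ∈ M) (huw : u ≤ w)
    (hw : e ≤ mdeg w) : ∃ c, c ∈ M ∧ c ≤ w ∧ mdeg c = e := by
  obtain ⟨g, hg, hgu⟩ := exists_minGen_le u hu
  have hgd : mdeg g ≤ e := (mdeg_minGen_le hg).trans he
  obtain ⟨c, hc1, hc2, hc3⟩ := interp (e - mdeg g) g w (hgu.trans huw) (by omega)
  exact ⟨c, mem_of_le_mem hM hg.1 hc1, hc2, by omega⟩

lemma update_eq_tsub {u : Fin n →₀ ℕ} {i : Fin n} :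
    Finsupp.update u i (u i - 1) = u - Finsupp.single i 1 := by
  ext k
  rcases eq_or_ne k i with rfl | h
  · simp [Finsupp.tsub_apply]
  · simp [Finsupp.tsub_apply, h, Finsupp.single_apply, Ne.symm h]

lemma decompose {M N : Set (Fin n →₀ ℕ)} (hM : MonIdeal M) (hN : MonIdeal N)
    {e f : ℕ} (he : idealDeg M ≤ e) (hf : idealDeg N ≤ f)
    {w : Fin n →₀ ℕ} (hw : w ∈ prodSet M N) (hd : e + f ≤ mdeg w) :
    ∃ u, u ∈ M ∧ ∃ v, v ∈ N ∧ e ≤ mdeg u ∧ f ≤ mdeg v ∧ u + v ≤ w := by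
  obtain ⟨u0, hu0, v0, hv0, rfl⟩ := hw
  -- first, a small piece of `N` of degree ≤ f below v0
  obtain ⟨v1, hv1, hv1le, hv1d⟩ :
      ∃ v1, v1 ∈ N ∧ v1 ≤ v0 ∧ mdeg v1 ≤ f := by
    rcases le_or_gt (mdeg v0) f with h | h
    · exact ⟨v0, hv0, le_rfl, h⟩
    · obtain ⟨c, hc1, hc2, hc3⟩ := exists_mem_mdeg_eq hN hf hv0 le_rfl h.le
      exact ⟨c, hc1, hc2, le_of_eq hc3⟩
  have hw1 : u0 + v1 ≤ u0 + v0 := add_le_add_right hv1le u0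
  have hu0le : u0 ≤ u0 + v0 - v1 := le_tsub_of_add_le_right hw1
  have hv1w : v1 ≤ u0 + v0 := hv1le.trans le_add_self
  have hWd : e ≤ mdeg (u0 + v0 - v1) := by
    rw [mdeg_tsub hv1w]; omega
  obtain ⟨u, huM, huW, hud⟩ := exists_mem_mdeg_eq hM he hu0 hu0le hWd
  have huw : u ≤ u0 + v0 := huW.trans tsub_le_self
  have huv1 : u + v1 ≤ u0 + v0 := by
    have h := add_le_add_left huW v1
    rwa [tsub_add_cancel_of_le hv1w] at h
  have hv1le' : v1 ≤ u0 + v0 - u := le_tsub_of_add_le_left huv1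
  have hWd2 : mdeg v1 + (f - mdeg v1) ≤ mdeg (u0 + v0 - u) := by
    rw [mdeg_tsub huw, hud]; omega
  obtain ⟨v, hvv1, hvW, hvd⟩ := interp (f - mdeg v1) v1 _ hv1le' hWd2
  refine ⟨u, huM, v, mem_of_le_mem hN hv1 hvv1, le_of_eq hud.symm, by omega, ?_⟩
  have h := add_le_add_right hvW u
  rwa [add_tsub_cancel_of_le huw] at h
end Aux

/-- if `I_{≥e}` and `J_{≥f}` are stable (`e ≥ deg I`, `f ≥ deg J`),
then `(I·J)_{≥ e+f}` is stable. -/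
theorem statement9 {n : ℕ} (M N : Set (Fin n →₀ ℕ))
    (hM : MonIdeal M) (hN : MonIdeal N)
    (e f : ℕ) (he : idealDeg M ≤ e) (hf : idealDeg N ≤ f)
    (hse : StableProp (geSet M e)) (hsf : StableProp (geSet N f)) :
    StableProp (geSet (prodSet M N) (e + f)) := by
  intro w hw i hi j hji
  have hprod : MonIdeal (prodSet M N) := by
    rintro w ⟨u, hu, v, hv, rfl⟩ r
    exact ⟨u, hu, v + r, hN v hv r, by rw [add_assoc]⟩
  simp only [mem_geSet_iff hprod] at hw ⊢
  obtain ⟨hwP, hwd⟩ := hw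
  obtain ⟨u, hu, v, hv, hue, hvf, huvw⟩ := decompose hM hN he hf hwP hwd
  set r := w - (u + v) with hr
  have hwr : w = u + v + r := by
    rw [hr, add_tsub_cancel_of_le huvw]
  clear_value r
  have hwi : w i ≠ 0 := hi.1
  have hsi : Finsupp.single i 1 ≤ w := Finsupp.single_le_iff.2 (by omega)
  rw [update_eq_tsub]
  have hptw : ∀ k, w k = u k + v k + r k := by
    intro k; rw [hwr]; simp
  constructor
  · -- membership in the product
    rcases Nat.eq_zero_or_pos (r i) with hri | hri
    · rcases Nat.eq_zero_or_pos (v i) with hvi | hvi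
      · -- v i = 0 and r i = 0, so u i = w i ≠ 0 : use stability of geSet M e
        have hui : u i ≠ 0 := by have := hptw i; omega
        have humax : IsMaxVar u i := by
          refine ⟨hui, fun k hk => ?_⟩
          have h1 := hi.2 k hk
          have h2 := hptw k
          omega
        have huge : u ∈ geSet M e := ⟨u, hu, hue, le_rfl⟩
        have hst := hse u huge i humax j hji
        rw [update_eq_tsub] at hst
        obtain ⟨u', hu'M, -, hu'le⟩ := hst
        have hu'mem : Finsupp.single j 1 + (u - Finsupp.single i 1) ∈ M :=
          mem_of_le_mem hM hu'M hu'le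
        refine ⟨Finsupp.single j 1 + (u - Finsupp.single i 1), hu'mem, v + r, hN v hv r, ?_⟩
        have hsu : Finsupp.single i 1 ≤ u := Finsupp.single_le_iff.2 (by omega)
        ext k
        have h2 := hptw k
        have hne : j ≠ i := hji.ne
        rcases eq_or_ne i k with rfl | hik
        · simp only [Finsupp.add_apply, Finsupp.tsub_apply, Finsupp.single_apply,
            if_pos rfl, if_neg hne, if_true]
          omega
        · rcases eq_or_ne j k with rfl | hjk
          · simp only [Finsupp.add_apply, Finsupp.tsub_apply, Finsupp.single_apply,
              if_pos rfl, if_neg hik, if_true]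
            omega
          · simp only [Finsupp.add_apply, Finsupp.tsub_apply, Finsupp.single_apply,
              if_neg hik, if_neg hjk]
            omega
      · -- v i ≠ 0 and r i = 0 : use stability of geSet N f
        have hvmax : IsMaxVar v i := by
          refine ⟨by omega, fun k hk => ?_⟩
          have h1 := hi.2 k hk
          have h2 := hptw k
          omega
        have hvge : v ∈ geSet N f := ⟨v, hv, hvf, le_rfl⟩
        have hst := hsf v hvge i hvmax j hji
        rw [update_eq_tsub] at hst
        obtain ⟨v', hv'N, -, hv'le⟩ := hst
        have hv'mem : Finsupp.single j 1 + (v - Finsupp.single i 1) ∈ N :=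
          mem_of_le_mem hN hv'N hv'le
        refine ⟨u, hu, Finsupp.single j 1 + (v - Finsupp.single i 1) + r,
          hN _ hv'mem r, ?_⟩
        have hsv : Finsupp.single i 1 ≤ v := Finsupp.single_le_iff.2 (by omega)
        ext k
        have h2 := hptw k
        have hne : j ≠ i := hji.ne
        rcases eq_or_ne i k with rfl | hik
        · simp only [Finsupp.add_apply, Finsupp.tsub_apply, Finsupp.single_apply,
            if_pos rfl, if_neg hne, if_true]
          omega
        · rcases eq_or_ne j k with rfl | hjk
          · simp only [Finsupp.add_apply, Finsupp.tsub_apply, Finsupp.single_apply,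
              if_pos rfl, if_neg hik, if_true]
            omega
          · simp only [Finsupp.add_apply, Finsupp.tsub_apply, Finsupp.single_apply,
              if_neg hik, if_neg hjk]
            omega
    · -- r i ≠ 0 : absorb into the `N`-factor
      have hsr : Finsupp.single i 1 ≤ r := Finsupp.single_le_iff.2 (by omega)
      refine ⟨u, hu, v + (Finsupp.single j 1 + (r - Finsupp.single i 1)),
        hN v hv _, ?_⟩
      ext k
      have h2 := hptw k
      have hne : j ≠ i := hji.ne
      rcases eq_or_ne i k with rfl | hik
      · simp only [Finsupp.add_apply, Finsupp.tsub_apply, Finsupp.single_apply,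
          if_pos rfl, if_neg hne, if_true]
        omega
      · rcases eq_or_ne j k with rfl | hjk
        · simp only [Finsupp.add_apply, Finsupp.tsub_apply, Finsupp.single_apply,
            if_pos rfl, if_neg hik, if_true]
          omega
        · simp only [Finsupp.add_apply, Finsupp.tsub_apply, Finsupp.single_apply,
            if_neg hik, if_neg hjk]
          omega
  · -- the degree bound
    have h1 : 1 ≤ mdeg w := le_trans (by rw [mdeg_single]) (mdeg_mono hsi)
    rw [mdeg_add, mdeg_single, mdeg_tsub hsi, mdeg_single]
    omega
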